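/- For all reals u, α, β with 0 < u < 1 and 0 < β ≤ 1/2: u^β ≥ u^(1/2) ≥ u · ln((1+u)/(2u)) / ln(2/(1+u)); in particular the chained inequality u^β ≥ u · ln((1+u)/(2u)) / ln(2/(1+u)) holds. -/

import Mathlib

private lemma hasDerivAt_f1 (y : ℝ) (hy : 0 < y) :
    HasDerivAt (fun y : ℝ => Real.log y - 3*(y^2-1)/(y^2+4*y+1))
      (1/y - 12*(y^2+y+1)/(y^2+4*y+1)^2) y := by
  have hden : y^2+4*y+1 ≠ 0 := by nlinarith
  have h1 : HasDerivAt (fun y : ℝ => 3*(y^2-1)) (3*(2*y)) y := by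
    simpa using (((hasDerivAt_pow 2 y).sub_const 1).const_mul 3)
  have h2 : HasDerivAt (fun y : ℝ => y^2+4*y+1) (2*y+4) y := by
    have := ((hasDerivAt_pow 2 y).add ((hasDerivAt_id y).const_mul 4)).add_const 1
    simpa [pow_one] using this
  have h3 := (h1.div h2 hden)
  have h4 := (Real.hasDerivAt_log hy.ne').sub h3
  refine h4.congr_deriv ?_
  rw [show (3*(2*y)*(y^2+4*y+1) - 3*(y^2-1)*(2*y+4)) = 12*(y^2+y+1) by ring, one_div]

private lemma log_ge_pade {x : ℝ} (hx : 1 ≤ x) :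
    3*(x^2-1)/(x^2+4*x+1) ≤ Real.log x := by
  set f : ℝ → ℝ := fun y => Real.log y - 3*(y^2-1)/(y^2+4*y+1) with hf
  have hmono : MonotoneOn f (Set.Ici 1) := by
    apply monotoneOn_of_deriv_nonneg (convex_Ici 1)
    · intro y hy
      exact (hasDerivAt_f1 y (lt_of_lt_of_le one_pos hy)).continuousAt.continuousWithinAt
    · intro y hy
      rw [interior_Ici] at hy
      exact (hasDerivAt_f1 y (lt_trans one_pos hy)).differentiableAt.differentiableWithinAt
    · intro y hy
      rw [interior_Ici] at hy
      have hy1 : (1:ℝ) < y := hy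
      have hy0 : (0:ℝ) < y := lt_trans one_pos hy1
      rw [(hasDerivAt_f1 y hy0).deriv]
      have hden : (0:ℝ) < (y^2+4*y+1)^2 := by positivity
      rw [sub_nonneg, div_le_div_iff₀ hden hy0]
      nlinarith [pow_nonneg (sub_nonneg.2 hy1.le) 4, sq_nonneg (y-1)]
  have h := hmono (Set.self_mem_Ici) (Set.mem_Ici.2 hx) hx
  have hf1 : f 1 = 0 := by simp [hf]
  rw [hf1] at h
  simpa [hf, sub_nonneg] using h

private lemma hasDerivAt_f2 (y : ℝ) (hy : 0 < y) :
    HasDerivAt (fun y : ℝ => (y^2+4*y-5)/(2*(2*y+1)) - Real.log y)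
      ((y^2+y+7)/(2*y+1)^2 - 1/y) y := by
  have hden : 2*(2*y+1) ≠ 0 := by nlinarith
  have h1 : HasDerivAt (fun y : ℝ => y^2+4*y-5) (2*y+4) y := by
    have := ((hasDerivAt_pow 2 y).add ((hasDerivAt_id y).const_mul 4)).sub_const 5
    simpa [pow_one] using this
  have h2 : HasDerivAt (fun y : ℝ => 2*(2*y+1)) (2*2) y := by
    simpa using (((hasDerivAt_id y).const_mul 2).add_const 1).const_mul 2
  have h3 := (h1.div h2 hden).sub (Real.hasDerivAt_log hy.ne')
  refine h3.congr_deriv ?_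
  field_simp
  ring

private lemma log_le_pade {x : ℝ} (hx : 1 ≤ x) :
    Real.log x ≤ (x^2+4*x-5)/(2*(2*x+1)) := by
  set f : ℝ → ℝ := fun y => (y^2+4*y-5)/(2*(2*y+1)) - Real.log y with hf
  have hmono : MonotoneOn f (Set.Ici 1) := by
    apply monotoneOn_of_deriv_nonneg (convex_Ici 1)
    · intro y hy
      exact (hasDerivAt_f2 y (lt_of_lt_of_le one_pos hy)).continuousAt.continuousWithinAt
    · intro y hy
      rw [interior_Ici] at hy
      exact (hasDerivAt_f2 y (lt_trans one_pos hy)).differentiableAt.differentiableWithinAt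
    · intro y hy
      rw [interior_Ici] at hy
      have hy1 : (1:ℝ) < y := hy
      have hy0 : (0:ℝ) < y := lt_trans one_pos hy1
      rw [(hasDerivAt_f2 y hy0).deriv]
      have hden : (0:ℝ) < (2*y+1)^2 := by positivity
      rw [sub_nonneg, div_le_div_iff₀ hy0 hden]
      nlinarith [pow_nonneg (sub_nonneg.2 hy1.le) 3]
  have h := hmono (Set.self_mem_Ici) (Set.mem_Ici.2 hx) hx
  have hf1 : f 1 = 0 := by norm_num [hf]
  rw [hf1] at h
  simpa [hf, sub_nonneg] using h

private lemma key_ineq {t : ℝ} (h0 : 0 < t) (h1 : t < 1) :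
    2*t*Real.log (1/t) ≤ (1+t)*Real.log (2/(1+t^2)) := by
  have ht : t ≠ 0 := h0.ne'
  have hx1 : (1:ℝ) ≤ 1/t := by rw [le_div_iff₀ h0]; linarith
  have hx2 : (1:ℝ) ≤ 2/(1+t^2) := by
    rw [le_div_iff₀ (by positivity)]; nlinarith
  have h2 := log_le_pade hx1
  have h3 := log_ge_pade hx2
  calc 2*t*Real.log (1/t)
      ≤ 2*t*(((1/t)^2+4*(1/t)-5)/(2*(2*(1/t)+1))) := by
        apply mul_le_mul_of_nonneg_left h2 (by positivity)
    _ ≤ (1+t)*(3*((2/(1+t^2))^2-1)/((2/(1+t^2))^2+4*(2/(1+t^2))+1)) := by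
        have e1 : 2*t*(((1/t)^2+4*(1/t)-5)/(2*(2*(1/t)+1))) = (1-t)*(1+5*t)/(2+t) := by
          field_simp
          ring
        have e2 : (1+t)*(3*((2/(1+t^2))^2-1)/((2/(1+t^2))^2+4*(2/(1+t^2))+1))
            = 3*(1+t)^2*(1-t)*(3+t^2)/(t^4+10*t^2+13) := by
          have hd : (2/(1+t^2))^2+4*(2/(1+t^2))+1 = (t^4+10*t^2+13)/(1+t^2)^2 := by
            field_simp; ring
          rw [hd]
          field_simp
          ring
        rw [e1, e2, div_le_div_iff₀ (by positivity) (by positivity)]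
        nlinarith [mul_nonneg (pow_nonneg (sub_nonneg.2 h1.le) 4)
          (show (0:ℝ) ≤ 2*t^2-5*t+5 by nlinarith [sq_nonneg (4*t-5)])]
    _ ≤ (1+t)*Real.log (2/(1+t^2)) := by
        apply mul_le_mul_of_nonneg_left h3 (by positivity)

theorem stmt_16 (u β : ℝ) (hu₀ : 0 < u) (hu₁ : u < 1) (hβ₀ : 0 < β) (hβ₁ : β ≤ 1 / 2) :
    u ^ β ≥ u ^ ((1 : ℝ) / 2) ∧
    u ^ ((1 : ℝ) / 2) ≥ u * Real.log ((1 + u) / (2 * u)) / Real.log (2 / (1 + u)) ∧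
    u ^ β ≥ u * Real.log ((1 + u) / (2 * u)) / Real.log (2 / (1 + u)) := by
  have h1 : u ^ β ≥ u ^ ((1 : ℝ) / 2) :=
    Real.rpow_le_rpow_of_exponent_ge hu₀ hu₁.le hβ₁
  have h2 : u ^ ((1 : ℝ) / 2) ≥ u * Real.log ((1 + u) / (2 * u)) / Real.log (2 / (1 + u)) := by
    set t := Real.sqrt u with htdef
    have ht0 : 0 < t := Real.sqrt_pos.2 hu₀
    have ht1 : t < 1 := by
      rw [htdef, show (1:ℝ) = Real.sqrt 1 by simp]
      exact Real.sqrt_lt_sqrt hu₀.le hu₁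
    have htu : t^2 = u := Real.sq_sqrt hu₀.le
    have hA : 0 < Real.log (2 / (1 + u)) := by
      apply Real.log_pos
      rw [lt_div_iff₀ (by linarith)]; linarith
    have hrw : u ^ ((1:ℝ)/2) = t := (Real.sqrt_eq_rpow u).symm
    rw [ge_iff_le, div_le_iff₀ hA, hrw]
    have key := key_ineq ht0 ht1
    rw [htu] at key
    have hBrel : Real.log ((1 + u) / (2 * u)) = -Real.log (2/(1+u)) + 2*Real.log (1/t) := by
      rw [Real.log_div (by linarith) (by positivity), Real.log_div (by norm_num) (by linarith),
        Real.log_mul (by norm_num) hu₀.ne', Real.log_div one_ne_zero ht0.ne', Real.log_one,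
        ← htu, Real.log_pow]
      push_cast
      ring
    rw [hBrel]
    nlinarith [mul_le_mul_of_nonneg_left key ht0.le, htu]
  exact ⟨h1, h2, le_trans h2 h1⟩
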